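/- Let Q > 0 and γ ≥ 0, and define F : ℝ → ℂ by F(v) = (iv)^γ e^{−(iQv)^{1/2}}, where the powers use the branch of w ↦ w^s holomorphic on ℂ \ (−∞,0] agreeing with the arithmetic power on (0,∞). Then F extends holomorphically to the lower half-plane {z : Im z < 0}, and for z = v + is with s < 0 one has |F(z)| ≤ |v − is|^γ e^{−cos(π/4) Q^{1/2} |v|^{1/2}} whenever |arg(iz)| ≤ π/2. Consequently F belongs to the Hardy space H²(Ω₋) of the lower half-plane, its Fourier transform F̂ vanishes on (0,∞), and there exists σ > 0 with F̂(−σ) ≠ 0. -/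

import Mathlib

open Complex Real MeasureTheory FourierTransform Filter Set Topology

noncomputable def Fdef (Q γ : ℝ) : ℂ → ℂ :=
  fun z => (Complex.I * z) ^ (γ : ℂ) * Complex.exp (-((Complex.I * Q * z) ^ ((1:ℂ)/2)))

lemma aux_re_sqrt {w : ℂ} (hw : 0 ≤ w.re) (hw0 : w ≠ 0) :
    Real.cos (π/4) * Real.sqrt (‖w‖) ≤ (w ^ ((1:ℂ)/2)).re := by
  rw [Complex.cpow_def_of_ne_zero hw0, Complex.exp_re]
  have h1 : (Complex.log w * (1/2)).re = Real.log (‖w‖) / 2 := by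
    simp [Complex.mul_re, Complex.log_re, Complex.log_im]; ring
  have h2 : (Complex.log w * (1/2)).im = Complex.arg w / 2 := by
    simp [Complex.mul_im, Complex.log_re, Complex.log_im]; ring
  rw [h1, h2]
  have habs : Real.exp (Real.log (‖w‖) / 2) = Real.sqrt (‖w‖) := by
    rw [Real.sqrt_eq_rpow, Real.rpow_def_of_pos (norm_pos_iff.mpr hw0)]
    ring_nf
  rw [habs]
  have harg : |Complex.arg w| ≤ π/2 := Complex.abs_arg_le_pi_div_two_iff.mpr hw
  have hcos : Real.cos (π/4) ≤ Real.cos (Complex.arg w / 2) := by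
    rw [← Real.cos_abs (Complex.arg w / 2)]
    apply Real.cos_le_cos_of_nonneg_of_le_pi (abs_nonneg _) (by linarith [Real.pi_pos])
    rw [abs_div]
    rw [_root_.abs_of_nonneg (by norm_num : (0:ℝ) ≤ 2)]
    linarith
  calc Real.cos (π/4) * Real.sqrt (‖w‖)
      ≤ Real.cos (Complex.arg w / 2) * Real.sqrt (‖w‖) :=
        mul_le_mul_of_nonneg_right hcos (Real.sqrt_nonneg _)
    _ = Real.sqrt (‖w‖) * Real.cos (Complex.arg w / 2) := mul_comm _ _

lemma aux_abs_F {Q γ : ℝ} (z : ℂ) (hz : z ≠ 0) :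
    ‖Fdef Q γ z‖ =
      ‖z‖ ^ γ * Real.exp (-((Complex.I * Q * z) ^ ((1:ℂ)/2)).re) := by
  unfold Fdef
  rw [norm_mul, Complex.norm_cpow_of_ne_zero (by simp [hz] : Complex.I * z ≠ 0)]
  simp [Complex.norm_exp]

lemma aux_decay {Q γ : ℝ} (hQ : 0 < Q) (z : ℂ) (hz : z ≠ 0) (him : z.im ≤ 0) :
    ‖Fdef Q γ z‖ ≤
      ‖z‖ ^ γ *
        Real.exp (-(Real.cos (π/4) * Real.sqrt Q * Real.sqrt (‖z‖))) := by
  rw [aux_abs_F z hz]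
  have hw0 : Complex.I * Q * z ≠ 0 := by
    simp [Complex.ext_iff, hz, Complex.I_ne_zero, hQ.ne']
  have hwre : 0 ≤ (Complex.I * (Q:ℂ) * z).re := by
    simp [Complex.mul_re, Complex.mul_im]
    nlinarith
  have h := aux_re_sqrt hwre hw0
  have habs : ‖Complex.I * Q * z‖ = Q * ‖z‖ := by
    simp [abs_of_pos hQ]
  rw [habs, Real.sqrt_mul hQ.le] at h
  have : Real.cos (π/4) * Real.sqrt Q * Real.sqrt (‖z‖)
      ≤ ((Complex.I * Q * z) ^ ((1:ℂ)/2)).re := by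
    calc Real.cos (π/4) * Real.sqrt Q * Real.sqrt (‖z‖)
        = Real.cos (π/4) * (Real.sqrt Q * Real.sqrt (‖z‖)) := by ring
      _ ≤ _ := h
  exact mul_le_mul_of_nonneg_left (Real.exp_le_exp.mpr (by linarith))
    (Real.rpow_nonneg (norm_nonneg _) _)

lemma aux_master (p c : ℝ) (hp : 0 ≤ p) (hc : 0 < c) :
    ∃ C : ℝ, 2 ≤ C ∧ ∀ r : ℝ, 0 ≤ r →
      (1 + r^2) * r ^ p ≤ C * Real.exp (c * Real.sqrt r) := by
  obtain ⟨k, hk⟩ : ∃ k : ℕ, p + 2 ≤ k := exists_nat_ge (p+2)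
  set D : ℝ := ((Nat.factorial (2*k) : ℝ)) / c^(2*k) with hD
  have hD0 : 0 ≤ D := div_nonneg (by positivity) (by positivity)
  refine ⟨2 + 2 * D, by linarith, fun r hr => ?_⟩
  set E : ℝ := Real.exp (c * Real.sqrt r) with hE
  have hE1 : 1 ≤ E := Real.one_le_exp (by positivity)
  have hpow : ∀ q : ℝ, 0 ≤ q → q ≤ k → r ^ q ≤ 1 + r ^ k := by
    intro q hq hqk
    rcases le_or_gt r 1 with h1 | h1
    · have := Real.rpow_le_one hr h1 hq
      have : (0:ℝ) ≤ r ^ k := pow_nonneg hr k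
      linarith [Real.rpow_le_one hr h1 hq]
    · have : r ^ q ≤ r ^ (k:ℝ) := Real.rpow_le_rpow_of_exponent_le h1.le hqk
      rw [Real.rpow_natCast] at this
      linarith
  have h1 : r ^ p ≤ 1 + r ^ k := hpow p hp (by linarith)
  have h2 : r ^ (p+2) ≤ 1 + r ^ k := hpow (p+2) (by linarith) hk
  have hsplit : (1 + r^2) * r ^ p = r ^ p + r ^ (p+2) := by
    rw [Real.rpow_add' hr (by linarith)]
    rw [show ((2:ℝ)) = ((2:ℕ):ℝ) by norm_num, Real.rpow_natCast]
    ring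
  have hk2 : r ^ k ≤ D * E := by
    have h3 : (c * Real.sqrt r)^(2*k) / (Nat.factorial (2*k) : ℝ) ≤ E := Real.pow_div_factorial_le_exp (x := c * Real.sqrt r) (by positivity) (2*k)
    have h4 : (c * Real.sqrt r)^(2*k) = c^(2*k) * r^k := by
      rw [mul_pow]
      congr 1
      rw [pow_mul, Real.sq_sqrt hr]
    rw [h4] at h3
    rw [hD, div_mul_eq_mul_div, le_div_iff₀ (by positivity)]
    rw [div_le_iff₀ (by positivity : (0:ℝ) < ((Nat.factorial (2*k)) : ℝ))] at h3
    calc r ^ k * c^(2*k) = c^(2*k) * r^k := by ring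
      _ ≤ E * (Nat.factorial (2*k) : ℝ) := h3
      _ = (Nat.factorial (2*k) : ℝ) * E := by ring
  calc (1 + r^2) * r ^ p = r ^ p + r ^ (p+2) := hsplit
    _ ≤ 2 + 2 * r^k := by linarith
    _ ≤ 2 * E + 2 * (D * E) := by nlinarith
    _ = (2 + 2*D) * E := by ring

lemma aux_F_zero (Q γ : ℝ) : ‖Fdef Q γ 0‖ ≤ 1 := by
  unfold Fdef
  rw [show Complex.I * (Q:ℂ) * 0 = 0 by ring, show Complex.I * (0:ℂ) = 0 by ring]
  rw [Complex.zero_cpow (by norm_num : ((1:ℂ)/2) ≠ 0)]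
  rcases eq_or_ne (γ:ℂ) 0 with h | h
  · rw [h, Complex.cpow_zero]; simp
  · rw [Complex.zero_cpow h]; simp

lemma aux_C {Q γ : ℝ} (hQ : 0 < Q) (hγ : 0 ≤ γ) :
    ∃ C : ℝ, 2 ≤ C ∧ ∀ z : ℂ, z.im ≤ 0 →
      ‖Fdef Q γ z‖ ≤ C / (1 + z.re^2) := by
  have hc : 0 < Real.cos (π/4) * Real.sqrt Q := by
    rw [Real.cos_pi_div_four]; positivity
  obtain ⟨C, hC2, hC⟩ := aux_master γ (Real.cos (π/4) * Real.sqrt Q) hγ hc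
  refine ⟨C, hC2, fun z him => ?_⟩
  rcases eq_or_ne z 0 with rfl | hz
  · simpa using (aux_F_zero Q γ).trans (by linarith)
  · set r : ℝ := ‖z‖ with hr
    have hr0 : 0 < r := norm_pos_iff.mpr hz
    have key : ‖Fdef Q γ z‖ ≤ C / (1 + r^2) := by
      have h1 := aux_decay (γ := γ) hQ z hz him
      have h2 := hC r hr0.le
      have hE : (0:ℝ) < Real.exp (Real.cos (π/4) * Real.sqrt Q * Real.sqrt r) :=
        Real.exp_pos _
      have h12 : (0:ℝ) < 1 + r^2 := by positivity
      have h3 : r ^ γ * Real.exp (-(Real.cos (π/4) * Real.sqrt Q * Real.sqrt r))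
          ≤ C / (1 + r^2) := by
        rw [Real.exp_neg, ← div_eq_mul_inv, div_le_div_iff₀ hE h12]
        nlinarith
      exact h1.trans h3
    refine key.trans ?_
    apply div_le_div_of_nonneg_left (by linarith) (by positivity)
    have := Complex.abs_re_le_norm z
    nlinarith [_root_.sq_abs z.re, mul_self_le_mul_self (abs_nonneg z.re) this]

lemma aux_diff {Q γ : ℝ} {z : ℂ} (h1 : Complex.I * z ∈ Complex.slitPlane)
    (h2 : Complex.I * (Q:ℂ) * z ∈ Complex.slitPlane) :
    DifferentiableAt ℂ (Fdef Q γ) z := by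
  have d1 : DifferentiableAt ℂ (fun w => (Complex.I * w) ^ (γ:ℂ)) z :=
    (differentiableAt_id.const_mul Complex.I).cpow (differentiableAt_const _) h1
  have d2 : DifferentiableAt ℂ (fun w => Complex.I * (Q:ℂ) * w) z :=
    differentiableAt_id.const_mul _
  have d3 : DifferentiableAt ℂ (fun w => (Complex.I * (Q:ℂ) * w) ^ ((1:ℂ)/2)) z :=
    d2.cpow (differentiableAt_const _) h2
  exact d1.mul d3.neg.cexp

lemma aux_slit {Q : ℝ} (hQ : 0 < Q) {z : ℂ} (him : z.im ≤ 0) (hz : z ≠ 0) :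
    Complex.I * z ∈ Complex.slitPlane ∧ Complex.I * (Q:ℂ) * z ∈ Complex.slitPlane := by
  rcases lt_or_eq_of_le him with h | h
  · constructor <;> [left; left] <;> simp [Complex.mul_re] <;> nlinarith
  · have hre : z.re ≠ 0 := by
      intro h0
      exact hz (by simp [Complex.ext_iff, h0, ← h])
    constructor <;> [right; right] <;>
      simp [Complex.mul_im, Complex.mul_re, h, hre, hQ.ne']

lemma aux_cont0 {Q γ : ℝ} (hQ : 0 < Q) (hγ : 0 ≤ γ) :
    ContinuousAt (Fdef Q γ) 0 := by
  apply ContinuousAt.mul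
  · rcases eq_or_lt_of_le hγ with h | h
    · have : (fun w : ℂ => (Complex.I * w) ^ (γ:ℂ)) = fun _ => 1 := by
        funext w
        rw [← h]
        simp
      exact this ▸ continuousAt_const
    · have hp : ContinuousAt (fun x : ℂ × ℂ => x.1 ^ x.2) (0, (γ:ℂ)) :=
        Complex.continuousAt_cpow_zero_of_re_pos (by simpa using h)
      have hm : ContinuousAt (fun w : ℂ => ((Complex.I * w, (γ:ℂ)) : ℂ × ℂ)) 0 :=
        ((continuous_const.mul continuous_id).prodMk continuous_const).continuousAt
      have hp' : ContinuousAt (fun x : ℂ × ℂ => x.1 ^ x.2)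
          ((fun w : ℂ => ((Complex.I * w, (γ:ℂ)) : ℂ × ℂ)) 0) := by simpa using hp
      have := ContinuousAt.comp (g := fun x : ℂ × ℂ => x.1 ^ x.2)
        (f := fun w : ℂ => ((Complex.I * w, (γ:ℂ)) : ℂ × ℂ)) (x := 0) hp' hm
      simpa [Function.comp_def] using this
  · have hp : ContinuousAt (fun x : ℂ × ℂ => x.1 ^ x.2) (0, ((1:ℂ)/2)) :=
      Complex.continuousAt_cpow_zero_of_re_pos (by norm_num)
    have hm : ContinuousAt (fun w : ℂ => ((Complex.I * (Q:ℂ) * w, ((1:ℂ)/2)) : ℂ × ℂ)) 0 :=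
      ((continuous_const.mul continuous_id).prodMk continuous_const).continuousAt
    have hc : ContinuousAt (fun w : ℂ => (Complex.I * (Q:ℂ) * w) ^ ((1:ℂ)/2)) 0 := by
      have hp' : ContinuousAt (fun x : ℂ × ℂ => x.1 ^ x.2)
          ((fun w : ℂ => ((Complex.I * (Q:ℂ) * w, ((1:ℂ)/2)) : ℂ × ℂ)) 0) := by simpa using hp
      have := ContinuousAt.comp (g := fun x : ℂ × ℂ => x.1 ^ x.2)
        (f := fun w : ℂ => ((Complex.I * (Q:ℂ) * w, ((1:ℂ)/2)) : ℂ × ℂ)) (x := 0) hp' hm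
      simpa [Function.comp_def] using this
    exact hc.neg.cexp

lemma aux_contAt {Q γ : ℝ} (hQ : 0 < Q) (hγ : 0 ≤ γ) {z : ℂ} (him : z.im ≤ 0) :
    ContinuousAt (Fdef Q γ) z := by
  rcases eq_or_ne z 0 with rfl | hz
  · exact aux_cont0 hQ hγ
  · obtain ⟨h1, h2⟩ := aux_slit hQ him hz
    exact (aux_diff h1 h2).continuousAt

lemma aux_cont_line {Q γ : ℝ} (hQ : 0 < Q) (hγ : 0 ≤ γ) {s : ℝ} (hs : s ≤ 0) :
    Continuous (fun v : ℝ => Fdef Q γ (v + s * Complex.I)) := by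
  apply continuous_iff_continuousAt.mpr
  intro v
  have h1 : ContinuousAt (Fdef Q γ) ((v : ℂ) + s * Complex.I) := by
    apply aux_contAt hQ hγ
    simp [hs]
  exact ContinuousAt.comp (f := fun v : ℝ => (v : ℂ) + s * Complex.I) (x := v) h1
    ((Complex.continuous_ofReal.add continuous_const).continuousAt)

lemma aux_fourier_zero {Q γ : ℝ} (hQ : 0 < Q) (hγ : 0 ≤ γ) (ξ : ℝ) (hξ : 0 < ξ) :
    𝓕 (fun v : ℝ => Fdef Q γ v) ξ = 0 := by
  obtain ⟨C, hC2, hC⟩ := aux_C hQ hγ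
  have hC0 : 0 ≤ C := by linarith
  set G : ℂ → ℂ :=
    fun z => Complex.exp ((((-2) * π * ξ : ℝ) : ℂ) * z * Complex.I) * Fdef Q γ z with hG
  -- pointwise bound
  have habsG : ∀ z : ℂ, z.im ≤ 0 →
      ‖G z‖ ≤ Real.exp (2 * π * ξ * z.im) * (C / (1 + z.re^2)) := by
    intro z him
    rw [hG]
    simp only [norm_mul]
    have hre : ((((-2) * π * ξ : ℝ) : ℂ) * z * Complex.I).re = 2 * π * ξ * z.im := by
      simp [Complex.mul_re, Complex.mul_im]
    rw [Complex.norm_exp, hre]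
    exact mul_le_mul_of_nonneg_left (hC z him) (Real.exp_pos _).le
  have habsG' : ∀ z : ℂ, z.im ≤ 0 →
      ‖G z‖ ≤ C / (1 + z.re^2) := by
    intro z him
    refine (habsG z him).trans ?_
    have h1 : Real.exp (2 * π * ξ * z.im) ≤ 1 := by
      rw [Real.exp_le_one_iff]
      have : (0:ℝ) ≤ 2 * π * ξ := by positivity
      nlinarith
    have h2 : (0:ℝ) ≤ C / (1 + z.re^2) := by positivity
    nlinarith
  -- continuity and differentiability of G
  have contG : ∀ z : ℂ, z.im ≤ 0 → ContinuousAt G z := by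
    intro z him
    exact (((continuous_const.mul continuous_id).mul
      continuous_const).cexp.continuousAt).mul (aux_contAt hQ hγ him)
  have diffG : ∀ z : ℂ, z.im < 0 → DifferentiableAt ℂ G z := by
    intro z him
    have hz : z ≠ 0 := by
      intro h; rw [h] at him; simp at him
    obtain ⟨h1, h2⟩ := aux_slit hQ him.le hz
    exact (((differentiableAt_const _).mul differentiableAt_id).mul
      (differentiableAt_const _)).cexp.mul (aux_diff h1 h2)
  -- integrability of G on the real line
  have hinv : Integrable (fun v : ℝ => C / (1 + v^2)) := by
    simp_rw [div_eq_mul_inv]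
    exact integrable_inv_one_add_sq.const_mul C
  have contGR : Continuous (fun v : ℝ => G (v : ℂ)) := by
    apply continuous_iff_continuousAt.mpr
    intro v
    exact (contG (v : ℂ) (by simp)).comp Complex.continuous_ofReal.continuousAt
  have intG : Integrable (fun v : ℝ => G (v : ℂ)) := by
    apply hinv.mono' contGR.aestronglyMeasurable
    filter_upwards with v
    have := habsG' (v : ℂ) (by simp)
    simpa using this
  -- rectangle contour identity
  have key : ∀ R : ℝ, 0 < R →
      ‖∫ x : ℝ in (-R)..R, G (x : ℂ)‖ ≤
        Real.exp ((-2) * π * ξ * R) * (C * π) + 2 * (C / (1 + R^2) * R) := by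
    intro R hR
    have hrect := Complex.integral_boundary_rect_eq_zero_of_differentiable_on_off_countable
      G (⟨-R, -R⟩ : ℂ) (⟨R, 0⟩ : ℂ) ∅ countable_empty ?_ ?_
    · rw [show ((⟨-R,-R⟩ : ℂ)).re = -R from rfl, show ((⟨R,0⟩:ℂ)).re = R from rfl,
        show ((⟨-R,-R⟩ : ℂ)).im = -R from rfl, show ((⟨R,0⟩:ℂ)).im = 0 from rfl] at hrect
      have htop : (∫ x : ℝ in (-R)..R, G ((x:ℂ) + ((0:ℝ):ℂ) * Complex.I))
          = ∫ x : ℝ in (-R)..R, G (x:ℂ) := by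
        apply intervalIntegral.integral_congr
        intro x _
        norm_num
      rw [htop] at hrect
      have hiden : (∫ x : ℝ in (-R)..R, G (x:ℂ)) =
          (∫ x : ℝ in (-R)..R, G ((x:ℂ) + ((-R:ℝ):ℂ) * Complex.I))
          + Complex.I • (∫ y : ℝ in (-R)..(0:ℝ), G (((R:ℝ):ℂ) + (y:ℂ) * Complex.I))
          - Complex.I • (∫ y : ℝ in (-R)..(0:ℝ), G (((-R:ℝ):ℂ) + (y:ℂ) * Complex.I)) := by
        linear_combination -hrect
      -- bound each of the three pieces
      have hbot : ‖∫ x : ℝ in (-R)..R, G ((x:ℂ) + ((-R:ℝ):ℂ) * Complex.I)‖ ≤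
          Real.exp ((-2) * π * ξ * R) * (C * π) := by
        have hb1 : ‖∫ x : ℝ in (-R)..R, G ((x:ℂ) + ((-R:ℝ):ℂ) * Complex.I)‖ ≤
            |∫ x : ℝ in (-R)..R, Real.exp ((-2) * π * ξ * R) * (C / (1 + x^2))| := by
          apply intervalIntegral.norm_integral_le_abs_of_norm_le
          · filter_upwards with t
            have him : ((t:ℂ) + ((-R:ℝ):ℂ) * Complex.I).im = -R := by simp
            have hre : ((t:ℂ) + ((-R:ℝ):ℂ) * Complex.I).re = t := by simp
            have := habsG ((t:ℂ) + ((-R:ℝ):ℂ) * Complex.I) (by rw [him]; linarith)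
            rw [him, hre] at this
            convert this using 3
            ring
          · exact (hinv.const_mul _).intervalIntegrable
        refine hb1.trans ?_
        have hval : (∫ x : ℝ in (-R)..R, Real.exp ((-2) * π * ξ * R) * (C / (1 + x^2)))
            = Real.exp ((-2) * π * ξ * R) * (C * (2 * Real.arctan R)) := by
          rw [intervalIntegral.integral_const_mul]
          congr 1
          simp_rw [div_eq_mul_inv]
          rw [intervalIntegral.integral_const_mul]
          congr 1
          have := integral_inv_one_add_sq (a := -R) (b := R)
          simp only [Real.arctan_neg] at this ⊢
          rw [show ((↑1:ℝ)) = (1:ℝ) from rfl] at this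
          rw [this]
          ring
        rw [hval]
        have h1 := Real.arctan_lt_pi_div_two R
        have h2 : 0 ≤ Real.arctan R := by
          rw [show (0:ℝ) = Real.arctan 0 by simp [Real.arctan_zero]]
          exact Real.arctan_strictMono.monotone hR.le
        have he := (Real.exp_pos ((-2) * π * ξ * R)).le
        rw [_root_.abs_of_nonneg (by positivity)]
        apply mul_le_mul_of_nonneg_left _ he
        apply mul_le_mul_of_nonneg_left _ hC0
        linarith
      have hside : ∀ a : ℝ, a^2 = R^2 →
          ‖Complex.I • (∫ y : ℝ in (-R)..(0:ℝ), G (((a:ℝ):ℂ) + (y:ℂ) * Complex.I))‖ ≤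
            C / (1 + R^2) * R := by
        intro a ha
        rw [norm_smul, Complex.norm_I, one_mul]
        have := intervalIntegral.norm_integral_le_of_norm_le_const
          (C := C / (1 + R^2)) (a := -R) (b := (0:ℝ))
          (f := fun y : ℝ => G (((a:ℝ):ℂ) + (y:ℂ) * Complex.I)) ?_
        · refine this.trans ?_
          rw [show |(0:ℝ) - (-R)| = R by rw [_root_.abs_of_nonneg] <;> linarith]
        · intro y hy
          rw [Set.uIoc_of_le (by linarith : (-R:ℝ) ≤ 0)] at hy
          have him : (((a:ℝ):ℂ) + (y:ℂ) * Complex.I).im = y := by simp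
          have hre : (((a:ℝ):ℂ) + (y:ℂ) * Complex.I).re = a := by simp
          have h := habsG' (((a:ℝ):ℂ) + (y:ℂ) * Complex.I) (by rw [him]; exact hy.2)
          rw [hre, ha] at h
          exact h
      calc ‖∫ x : ℝ in (-R)..R, G (x:ℂ)‖
          = ‖(∫ x : ℝ in (-R)..R, G ((x:ℂ) + ((-R:ℝ):ℂ) * Complex.I))
            + Complex.I • (∫ y : ℝ in (-R)..(0:ℝ), G (((R:ℝ):ℂ) + (y:ℂ) * Complex.I))
            - Complex.I • (∫ y : ℝ in (-R)..(0:ℝ), G (((-R:ℝ):ℂ) + (y:ℂ) * Complex.I))‖ := by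
            rw [hiden]
        _ ≤ ‖(∫ x : ℝ in (-R)..R, G ((x:ℂ) + ((-R:ℝ):ℂ) * Complex.I))
            + Complex.I • (∫ y : ℝ in (-R)..(0:ℝ), G (((R:ℝ):ℂ) + (y:ℂ) * Complex.I))‖
            + ‖Complex.I • (∫ y : ℝ in (-R)..(0:ℝ), G (((-R:ℝ):ℂ) + (y:ℂ) * Complex.I))‖ :=
            norm_sub_le _ _
        _ ≤ (‖(∫ x : ℝ in (-R)..R, G ((x:ℂ) + ((-R:ℝ):ℂ) * Complex.I))‖
            + ‖Complex.I • (∫ y : ℝ in (-R)..(0:ℝ), G (((R:ℝ):ℂ) + (y:ℂ) * Complex.I))‖)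
            + ‖Complex.I • (∫ y : ℝ in (-R)..(0:ℝ), G (((-R:ℝ):ℂ) + (y:ℂ) * Complex.I))‖ := by
            gcongr
            exact norm_add_le _ _
        _ ≤ (Real.exp ((-2) * π * ξ * R) * (C * π) + C / (1 + R^2) * R)
            + C / (1 + R^2) * R := by
            exact add_le_add (add_le_add hbot (hside R rfl)) (hside (-R) (by ring))
        _ = Real.exp ((-2) * π * ξ * R) * (C * π) + 2 * (C / (1 + R^2) * R) := by ring
    · -- continuity on the rectangle
      intro p hp
      rw [Complex.mem_reProdIm] at hp
      have : p.im ≤ 0 := by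
        have h2 := hp.2
        rw [show ((⟨-R,-R⟩ : ℂ)).im = -R from rfl, show ((⟨R,0⟩ : ℂ)).im = 0 from rfl,
          Set.uIcc_of_le (by linarith : (-R:ℝ) ≤ 0)] at h2
        exact h2.2
      exact (contG p this).continuousWithinAt
    · -- differentiability inside
      intro p hp
      obtain ⟨hp1, -⟩ := hp
      rw [Complex.mem_reProdIm] at hp1
      have : p.im < 0 := by
        have h2 := hp1.2
        rw [show ((⟨-R,-R⟩ : ℂ)).im = -R from rfl, show ((⟨R,0⟩ : ℂ)).im = 0 from rfl,
          max_eq_right (by linarith : (-R:ℝ) ≤ 0)] at h2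
        exact h2.2
      exact diffG p this
  -- limits
  have hT : Tendsto (fun R : ℝ => ∫ x : ℝ in (-R)..R, G (x:ℂ)) atTop
      (𝓝 (∫ v : ℝ, G (v:ℂ))) :=
    intervalIntegral_tendsto_integral intG tendsto_neg_atTop_atBot tendsto_id
  have herr : Tendsto (fun R : ℝ =>
      Real.exp ((-2) * π * ξ * R) * (C * π) + 2 * (C / (1 + R^2) * R)) atTop (𝓝 0) := by
    have t0 : Tendsto (fun R : ℝ => 2*π*ξ*R) atTop atTop :=
      Tendsto.const_mul_atTop (by positivity) tendsto_id
    have t1 : Tendsto (fun R : ℝ => Real.exp ((-2) * π * ξ * R) * (C * π)) atTop (𝓝 0) := by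
      have := (Real.tendsto_exp_atBot.comp (tendsto_neg_atTop_atBot.comp t0)).mul_const (C * π)
      rw [zero_mul] at this
      refine this.congr fun R => ?_
      simp only [Function.comp]
      congr 2
      ring
    have t2 : Tendsto (fun R : ℝ => 1/R + R) atTop atTop := by
      apply tendsto_atTop_mono' _ _ tendsto_id
      filter_upwards [eventually_gt_atTop (0:ℝ)] with R hR
      have : (0:ℝ) ≤ 1/R := by positivity
      simp only [id]
      linarith
    have t3 : Tendsto (fun R : ℝ => 2 * (C / (1 + R^2) * R)) atTop (𝓝 0) := by
      have h4 : Tendsto (fun R : ℝ => C / (1/R + R)) atTop (𝓝 0) :=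
        Tendsto.div_atTop tendsto_const_nhds t2
      have h5 := (h4.const_mul 2)
      rw [mul_zero] at h5
      apply h5.congr'
      filter_upwards [eventually_gt_atTop (0:ℝ)] with R hR
      have hR2 : (0:ℝ) < 1 + R^2 := by positivity
      field_simp
    have := t1.add t3
    rwa [add_zero] at this
  have hzero : Tendsto (fun R : ℝ => ∫ x : ℝ in (-R)..R, G (x:ℂ)) atTop (𝓝 0) := by
    apply squeeze_zero_norm' _ herr
    filter_upwards [eventually_gt_atTop (0:ℝ)] with R hR
    exact key R hR
  have hint0 : (∫ v : ℝ, G (v:ℂ)) = 0 := tendsto_nhds_unique hT hzero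
  rw [Real.fourier_real_eq_integral_exp_smul]
  have heq : (fun v : ℝ => Complex.exp (↑(-2 * π * v * ξ) * Complex.I) •
      (fun v : ℝ => Fdef Q γ (v:ℂ)) v) = fun v : ℝ => G (v:ℂ) := by
    funext v
    rw [hG]
    simp only [smul_eq_mul]
    congr 2
    push_cast
    ring
  rw [heq]
  exact hint0

lemma aux_part2 {Q γ : ℝ} (hQ : 0 < Q) (v s : ℝ) (hs : s < 0) :
    ‖Fdef Q γ (v + s * Complex.I)‖ ≤
      ‖(v : ℂ) - s * Complex.I‖ ^ γ *
        Real.exp (-(Real.cos (π / 4) * Real.sqrt Q * Real.sqrt |v|)) := by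
  set z : ℂ := (v : ℂ) + s * Complex.I with hz
  have him : z.im = s := by simp [hz]
  have hre : z.re = v := by simp [hz]
  have hz0 : z ≠ 0 := by
    intro h
    rw [h] at him
    simp at him
    exact hs.ne him.symm
  have h1 := aux_decay (γ := γ) hQ z hz0 (by rw [him]; exact hs.le)
  have habs : ‖(v : ℂ) - s * Complex.I‖ = ‖z‖ := by
    rw [Complex.norm_def, Complex.norm_def]
    congr 1
    simp [Complex.normSq_apply, hz]
  refine h1.trans ?_
  rw [habs]
  apply mul_le_mul_of_nonneg_left _ (Real.rpow_nonneg (norm_nonneg _) _)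
  apply Real.exp_le_exp.mpr
  have hv : |v| ≤ ‖z‖ := by
    have := Complex.abs_re_le_norm z
    rwa [hre] at this
  have hs' : Real.sqrt |v| ≤ Real.sqrt (‖z‖) := Real.sqrt_le_sqrt hv
  have hc : 0 ≤ Real.cos (π/4) * Real.sqrt Q := by
    rw [Real.cos_pi_div_four]; positivity
  nlinarith

lemma aux_part3 {Q γ : ℝ} (hQ : 0 < Q) (hγ : 0 ≤ γ) :
    ∃ B : ℝ, ∀ s : ℝ, s < 0 →
      (∫ v : ℝ, (‖Fdef Q γ (v + s * Complex.I)‖) ^ 2) ≤ B := by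
  obtain ⟨C, hC2, hC⟩ := aux_C hQ hγ
  have hC0 : (0:ℝ) ≤ C := by linarith
  have hg : Integrable (fun v : ℝ => C^2 * (1 + v^2)⁻¹) :=
    integrable_inv_one_add_sq.const_mul _
  refine ⟨∫ v : ℝ, C^2 * (1 + v^2)⁻¹, fun s hs => ?_⟩
  have hbound : ∀ v : ℝ, (‖Fdef Q γ (v + s * Complex.I)‖) ^ 2 ≤
      C^2 * (1 + v^2)⁻¹ := by
    intro v
    set z : ℂ := (v : ℂ) + s * Complex.I with hz
    have him : z.im = s := by simp [hz]
    have hre : z.re = v := by simp [hz]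
    have h1 := hC z (by rw [him]; exact hs.le)
    rw [hre] at h1
    have h2 : (0:ℝ) < 1 + v^2 := by positivity
    have h3 : ‖Fdef Q γ z‖ ^ 2 ≤ (C / (1 + v^2))^2 := by
      apply pow_le_pow_left₀ (norm_nonneg _) h1
    refine h3.trans ?_
    rw [div_pow, div_eq_mul_inv]
    apply mul_le_mul_of_nonneg_left _ (by positivity)
    apply inv_anti₀ h2
    nlinarith
  have hfi : Integrable (fun v : ℝ => (‖Fdef Q γ (v + s * Complex.I)‖) ^ 2) := by
    apply hg.mono'
    · exact ((continuous_norm.comp (aux_cont_line hQ hγ hs.le)).pow 2).aestronglyMeasurable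
    · filter_upwards with v
      rw [Real.norm_eq_abs, _root_.abs_of_nonneg (by positivity)]
      exact hbound v
  exact integral_mono hfi hg hbound

lemma aux_part5 {Q γ : ℝ} (hQ : 0 < Q) (hγ : 0 ≤ γ) :
    ∃ σ : ℝ, 0 < σ ∧ 𝓕 (fun v : ℝ => Fdef Q γ v) (-σ) ≠ 0 := by
  by_contra hcon
  push_neg at hcon
  set f : ℝ → ℂ := fun v : ℝ => Fdef Q γ v with hf
  obtain ⟨C, hC2, hC⟩ := aux_C hQ hγ
  have hcontf : Continuous f := by
    apply continuous_iff_continuousAt.mpr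
    intro v
    exact ContinuousAt.comp (f := fun v : ℝ => (v : ℂ)) (x := v)
      (aux_contAt hQ hγ (by simp)) Complex.continuous_ofReal.continuousAt
  have hInt : Integrable f := by
    apply Integrable.mono' ((integrable_inv_one_add_sq.const_mul C))
      hcontf.aestronglyMeasurable
    filter_upwards with v
    have := hC (v : ℂ) (by simp)
    simpa [div_eq_mul_inv] using this
  have hall : ∀ x : ℝ, x ≠ 0 → 𝓕 f x = 0 := by
    intro x hx
    rcases lt_or_gt_of_ne hx with h | h
    · have := hcon (-x) (by linarith)
      rwa [neg_neg] at this
    · exact aux_fourier_zero hQ hγ x h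
  have hcont𝓕 : Continuous (𝓕 f) :=
    VectorFourier.fourierIntegral_continuous Real.continuous_fourierChar
      (by exact continuous_inner) hInt
  have h0 : 𝓕 f 0 = 0 := by
    have h1 : Tendsto (𝓕 f) (𝓝[≠] (0:ℝ)) (𝓝 (𝓕 f 0)) :=
      (hcont𝓕.continuousAt).mono_left nhdsWithin_le_nhds
    have h2 : Tendsto (𝓕 f) (𝓝[≠] (0:ℝ)) (𝓝 0) := by
      apply Tendsto.congr' _ tendsto_const_nhds
      filter_upwards [self_mem_nhdsWithin] with x hx
      exact (hall x hx).symm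
    exact tendsto_nhds_unique h1 h2
  have hzero : 𝓕 f = 0 := by
    funext x
    rcases eq_or_ne x 0 with rfl | hx
    · exact h0
    · exact hall x hx
  have hInt2 : Integrable (𝓕 f) := by
    rw [hzero]
    exact integrable_zero _ _ _
  have hinv := hInt.fourierInv_fourier_eq hInt2
    (v := (1:ℝ)) (hcontf.continuousAt)
  rw [hzero] at hinv
  have hlhs : 𝓕⁻ (0 : ℝ → ℂ) (1:ℝ) = 0 := by
    rw [Real.fourierInv_eq]
    simp
  rw [hlhs] at hinv
  have hne : f 1 ≠ 0 := by
    rw [hf]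
    simp only [Complex.ofReal_one]
    unfold Fdef
    apply mul_ne_zero
    · intro h
      rw [Complex.cpow_eq_zero_iff] at h
      simp [Complex.I_ne_zero] at h
    · exact Complex.exp_ne_zero _
  exact hne hinv.symm

theorem hardy_space_lower_half_plane_function
    (Q γ : ℝ) (hQ : 0 < Q) (hγ : 0 ≤ γ)
    (F : ℂ → ℂ)
    (hF : ∀ z : ℂ, F z =
      (Complex.I * z) ^ (γ : ℂ) * Complex.exp (-((Complex.I * Q * z) ^ ((1:ℂ)/2)))) :
    DifferentiableOn ℂ F {z : ℂ | z.im < 0} ∧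
    (∀ v s : ℝ, s < 0 →
      ‖F (v + s * Complex.I)‖ ≤
        ‖(v : ℂ) - s * Complex.I‖ ^ γ *
          Real.exp (-(Real.cos (Real.pi / 4) * Real.sqrt Q * Real.sqrt |v|))) ∧
    (∃ B : ℝ, ∀ s : ℝ, s < 0 →
      ∫ v : ℝ, (‖F (v + s * Complex.I)‖) ^ 2 ≤ B) ∧
    (∀ ξ : ℝ, 0 < ξ → 𝓕 (fun v : ℝ => F (v : ℂ)) ξ = 0) ∧
    (∃ σ : ℝ, 0 < σ ∧ 𝓕 (fun v : ℝ => F (v : ℂ)) (-σ) ≠ 0) := by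
  have hFe : F = Fdef Q γ := funext hF
  subst hFe
  refine ⟨?_, ?_, ?_, ?_, ?_⟩
  · intro z hz
    simp only [Set.mem_setOf_eq] at hz
    have hz0 : z ≠ 0 := by
      intro h
      rw [h] at hz
      simp at hz
    obtain ⟨h1, h2⟩ := aux_slit hQ hz.le hz0
    exact (aux_diff h1 h2).differentiableWithinAt
  · exact fun v s hs => aux_part2 hQ v s hs
  · exact aux_part3 hQ hγ
  · exact fun ξ hξ => aux_fourier_zero hQ hγ ξ hξ
  · exact aux_part5 hQ hγ
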